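/- Suppose ∫_0^∞ Σ_{k=1}^m |a_k(s)| ds < ∞ and set A = exp(∫_0^∞ Σ_k |a_k(s)| ds). If t₀ ≥ 0 is chosen so that ∫_{t₀}^∞ Σ_k |a_k(s)| ds < 1/(2A), then the fundamental function satisfies X(t, t₀) ≥ 1/2 for all t ≥ t₀; in particular X(t,t₀) does not tend to 0, so the delay equation x'(t) + Σ_k a_k(t) x(h_k(t)) = 0 is not asymptotically stable. -/

import Mathlib

open MeasureTheory Real Finset Filter

lemma subst_exp_aux (w : ℝ → ℝ) (hw : Measurable w) (hw0 : ∀ τ, 0 ≤ w τ)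
    {t₀ t : ℝ} (ht : t₀ ≤ t) (hint : IntegrableOn w (Set.Ioc t₀ t)) :
    ∫ τ in Set.Ioc t₀ t, w τ * Real.exp (∫ σ in Set.Ioc t₀ τ, w σ) =
      Real.exp (∫ σ in Set.Ioc t₀ t, w σ) - 1 := by
  set W : ℝ → ℝ := fun u => ∫ σ in Set.Ioc t₀ (min u t), w σ with hWdef
  have hWeq : ∀ u, u ≤ t → W u = ∫ σ in Set.Ioc t₀ u, w σ := by
    intro u hu; simp only [hWdef, min_eq_left hu]
  have hWt : W t = ∫ σ in Set.Ioc t₀ t, w σ := hWeq t le_rfl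
  have hWmono : Monotone W := by
    intro u v huv
    exact setIntegral_mono_set (hint.mono_set (Set.Ioc_subset_Ioc_right (min_le_right _ _)))
      (Filter.Eventually.of_forall fun σ => hw0 σ)
      (HasSubset.Subset.eventuallyLE (Set.Ioc_subset_Ioc_right (min_le_min_right _ huv)))
  have hWmeas : Measurable W := hWmono.measurable
  have hW0 : ∀ u, 0 ≤ W u := fun u =>
    setIntegral_nonneg measurableSet_Ioc fun σ _ => hw0 σ
  have hWt₀ : W t₀ = 0 := by
    simp [hWdef, min_eq_left ht]
  -- continuity on Icc t₀ t
  have hWcont : ContinuousOn W (Set.Icc t₀ t) := by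
    have h1 : ContinuousOn (fun u => ∫ σ in Set.Ioc t₀ u, w σ) (Set.Icc t₀ t) :=
      intervalIntegral.continuousOn_primitive ((integrableOn_Icc_iff_integrableOn_Ioc).mpr hint)
    exact h1.congr fun u hu => hWeq u hu.2
  set μ : Measure ℝ :=
    (volume.restrict (Set.Ioc t₀ t)).withDensity (fun τ => ENNReal.ofReal (w τ)) with hμdef
  haveI hμfin : IsFiniteMeasure μ := by
    constructor
    rw [hμdef, withDensity_apply _ MeasurableSet.univ, Measure.restrict_univ]
    exact hint.lintegral_lt_top
  have hmap : Measure.map W μ = volume.restrict (Set.Ioc 0 (W t)) := by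
    haveI : IsFiniteMeasure (Measure.map W μ) := Measure.isFiniteMeasure_map μ W
    refine Measure.ext_of_Iic _ _ (fun c => ?_)
    rw [Measure.map_apply hWmeas measurableSet_Iic]
    rw [hμdef, withDensity_apply _ (hWmeas measurableSet_Iic),
      Measure.restrict_restrict (hWmeas measurableSet_Iic)]
    rw [Measure.restrict_apply measurableSet_Iic]
    rcases lt_or_ge c 0 with hc | hc
    · have h1 : W ⁻¹' Set.Iic c ∩ Set.Ioc t₀ t = ∅ := by
        ext τ; simp only [Set.mem_inter_iff, Set.mem_preimage, Set.mem_Iic, Set.mem_empty_iff_false,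
          iff_false, not_and]
        intro hτ _; exact absurd (hτ.trans_lt hc) (not_lt.mpr (hW0 τ))
      have h2 : Set.Iic c ∩ Set.Ioc 0 (W t) = ∅ := by
        ext x; simp only [Set.mem_inter_iff, Set.mem_Iic, Set.mem_Ioc, Set.mem_empty_iff_false,
          iff_false, not_and]
        intro hx hx0 _; exact absurd (hx.trans_lt hc) (not_lt.mpr hx0.le)
      simp [h1, h2]
    · -- 0 ≤ c
      set Sc : Set ℝ := Set.Icc t₀ t ∩ W ⁻¹' Set.Iic c with hScdef
      have hScne : Sc.Nonempty := ⟨t₀, ⟨le_rfl, ht⟩, by simp [Set.mem_preimage, hWt₀, hc]⟩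
      have hScbdd : BddAbove Sc := ⟨t, fun x hx => hx.1.2⟩
      have hScclosed : IsClosed Sc :=
        hWcont.preimage_isClosed_of_isClosed isClosed_Icc isClosed_Iic
      set u₀ : ℝ := sSup Sc with hu₀def
      have hu₀mem : u₀ ∈ Sc := hScclosed.csSup_mem hScne hScbdd
      have hu₀t : u₀ ≤ t := hu₀mem.1.2
      have ht₀u₀ : t₀ ≤ u₀ := hu₀mem.1.1
      have hWu₀ : W u₀ = min c (W t) := by
        rcases le_total c (W t) with h1 | h1
        · rw [min_eq_left h1]
          refine le_antisymm hu₀mem.2 ?_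
          have hc' : W t₀ ≤ c := by rw [hWt₀]; exact hc
          obtain ⟨u₁, hu₁mem, hWu₁⟩ := intermediate_value_Icc ht hWcont
            (Set.mem_Icc.mpr ⟨hc', h1⟩)
          have : u₁ ∈ Sc := ⟨hu₁mem, by simp [Set.mem_preimage, hWu₁]⟩
          calc c = W u₁ := hWu₁.symm
            _ ≤ W u₀ := hWmono (le_csSup hScbdd this)
        · rw [min_eq_right h1]
          have htSc : t ∈ Sc := ⟨⟨ht, le_rfl⟩, by simp [Set.mem_preimage]; exact h1⟩
          have : u₀ = t := le_antisymm hu₀t (le_csSup hScbdd htSc)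
          rw [this]
      have hpre : W ⁻¹' Set.Iic c ∩ Set.Ioc t₀ t = Set.Ioc t₀ u₀ := by
        ext τ
        simp only [Set.mem_inter_iff, Set.mem_preimage, Set.mem_Iic, Set.mem_Ioc]
        constructor
        · rintro ⟨hWτ, hτ1, hτ2⟩
          exact ⟨hτ1, le_csSup hScbdd ⟨⟨hτ1.le, hτ2⟩, hWτ⟩⟩
        · rintro ⟨hτ1, hτ2⟩
          exact ⟨le_trans (hWmono hτ2) hu₀mem.2, hτ1, hτ2.trans hu₀t⟩
      rw [hpre]
      have h2 : Set.Iic c ∩ Set.Ioc 0 (W t) = Set.Ioc 0 (min c (W t)) := by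
        ext x
        simp only [Set.mem_inter_iff, Set.mem_Iic, Set.mem_Ioc, le_min_iff]
        tauto
      rw [h2, Real.volume_Ioc]
      have h3 : ∫⁻ σ in Set.Ioc t₀ u₀, ENNReal.ofReal (w σ) =
          ENNReal.ofReal (∫ σ in Set.Ioc t₀ u₀, w σ) := by
        rw [ofReal_integral_eq_lintegral_ofReal
          (hint.mono_set (Set.Ioc_subset_Ioc_right hu₀t))
          (Filter.Eventually.of_forall fun σ => hw0 σ)]
      rw [h3, ← hWeq u₀ hu₀t, hWu₀]
      congr 1
      ring
  -- now compute the integral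
  have step1 : ∫ τ in Set.Ioc t₀ t, w τ * Real.exp (∫ σ in Set.Ioc t₀ τ, w σ) =
      ∫ τ in Set.Ioc t₀ t, w τ * Real.exp (W τ) := by
    refine setIntegral_congr_fun measurableSet_Ioc fun τ hτ => ?_
    rw [hWeq τ hτ.2]
  have step2 : ∫ τ in Set.Ioc t₀ t, w τ * Real.exp (W τ) =
      ∫ τ, Real.exp (W τ) ∂μ := by
    have hμ2 : μ = (volume.restrict (Set.Ioc t₀ t)).withDensity
        (fun τ => ((w τ).toNNReal : ENNReal)) := rfl
    rw [hμ2, integral_withDensity_eq_integral_smul (hw.real_toNNReal) _]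
    refine setIntegral_congr_fun measurableSet_Ioc fun τ _ => ?_
    simp [NNReal.smul_def, Real.coe_toNNReal _ (hw0 τ)]
  have step3 : ∫ τ, Real.exp (W τ) ∂μ = ∫ y, Real.exp y ∂(Measure.map W μ) := by
    rw [integral_map hWmeas.aemeasurable (Real.continuous_exp.aestronglyMeasurable)]
  have step4 : ∫ y, Real.exp y ∂(Measure.map W μ) = ∫ y in Set.Ioc 0 (W t), Real.exp y := by
    rw [hmap]
  have step5 : ∫ y in Set.Ioc 0 (W t), Real.exp y = Real.exp (W t) - 1 := by
    rw [← intervalIntegral.integral_of_le (hW0 t), integral_exp, Real.exp_zero]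
  rw [step1, step2, step3, step4, step5, hWt]

set_option maxHeartbeats 2000000 in
theorem stmt6 (m : ℕ) (a : Fin m → ℝ → ℝ) (h : Fin m → ℝ → ℝ) (X : ℝ → ℝ → ℝ)
    (hameas : ∀ k, Measurable (a k)) (habd : ∃ A : ℝ, ∀ k t, |a k t| ≤ A)
    (hh : ∀ k, Measurable (h k)) (hht : ∀ k t, h k t ≤ t)
    (hint : IntegrableOn (fun s => ∑ k : Fin m, |a k s|) (Set.Ici (0:ℝ)))
    (hX0 : ∀ s t : ℝ, 0 ≤ s → t < s → X t s = 0)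
    (hX1 : ∀ s : ℝ, 0 ≤ s → X s s = 1)
    (hXeq : ∀ s t : ℝ, 0 ≤ s → s ≤ t →
      X t s = 1 - ∫ τ in s..t, ∑ k : Fin m, a k τ * X (h k τ) s)
    (A : ℝ) (hA : A = Real.exp (∫ s in Set.Ici (0:ℝ), ∑ k : Fin m, |a k s|))
    (t₀ : ℝ) (ht₀ : 0 ≤ t₀)
    (ht₀small : (∫ s in Set.Ici t₀, ∑ k : Fin m, |a k s|) < 1 / (2 * A)) :
    (∀ t ≥ t₀, (1:ℝ)/2 ≤ X t t₀) ∧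
      ¬ Filter.Tendsto (fun t => X t t₀) Filter.atTop (nhds 0) := by
  classical
  set w : ℝ → ℝ := fun s => ∑ k : Fin m, |a k s| with hwdef
  have hwmeas : Measurable w := by
    apply Finset.measurable_sum
    intro k _
    exact (hameas k).abs
  have hw0 : ∀ s, 0 ≤ w s := fun s => Finset.sum_nonneg fun k _ => abs_nonneg _
  have hwIci : IntegrableOn w (Set.Ici t₀) :=
    hint.mono_set (Set.Ici_subset_Ici.mpr ht₀)
  have hwIoc : ∀ v : ℝ, IntegrableOn w (Set.Ioc t₀ v) := fun v =>
    hwIci.mono_set (fun x hx => Set.mem_Ici.mpr hx.1.le)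
  set ε : ℝ := ∫ s in Set.Ici t₀, w s with hεdef
  have hε0 : 0 ≤ ε := setIntegral_nonneg measurableSet_Ici fun s _ => hw0 s
  have hεI : ε ≤ ∫ s in Set.Ici (0:ℝ), w s :=
    setIntegral_mono_set hint (Filter.Eventually.of_forall hw0)
      (HasSubset.Subset.eventuallyLE (Set.Ici_subset_Ici.mpr ht₀))
  have hI0 : 0 ≤ ∫ s in Set.Ici (0:ℝ), w s :=
    setIntegral_nonneg measurableSet_Ici fun s _ => hw0 s
  have hApos : 0 < A := by rw [hA]; exact Real.exp_pos _
  have hεA : Real.exp ε * ε < 1/2 := by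
    have h1 : Real.exp ε ≤ A := by rw [hA]; exact Real.exp_le_exp.mpr hεI
    have h2 : ε < 1 / (2 * A) := ht₀small
    have h3 : Real.exp ε * ε ≤ A * ε :=
      mul_le_mul_of_nonneg_right h1 hε0
    have h4 : A * ε < A * (1 / (2 * A)) := by
      exact mul_lt_mul_of_pos_left h2 hApos
    have h5 : A * (1 / (2 * A)) = 1/2 := by field_simp
    linarith
  set M : ℝ := max (Real.exp ε * ε) (1/4) with hMdef
  have hMpos : (0:ℝ) < M := lt_max_of_lt_right (by norm_num)
  have hMlt : M < 1/2 := max_lt hεA (by norm_num)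
  set c : ℝ := 1 / (2 * M) with hcdef
  have hc1 : 1 < c := by
    rw [hcdef, lt_div_iff₀ (by positivity)]
    linarith
  have hc0 : 0 < c := lt_trans one_pos hc1
  have hc2 : c * (Real.exp ε * ε) ≤ 1/2 := by
    have h1 : c * (Real.exp ε * ε) ≤ c * M :=
      mul_le_mul_of_nonneg_left (le_max_left _ _) hc0.le
    have h2 : c * M = 1/2 := by
      rw [hcdef, div_mul_eq_mul_div, one_mul, div_eq_iff (by positivity : (2:ℝ) * M ≠ 0)]
      ring
    linarith
  -- the primitive W
  set W : ℝ → ℝ := fun u => ∫ σ in Set.Ioc t₀ u, w σ with hWdef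
  have hW0 : ∀ u, 0 ≤ W u := fun u => setIntegral_nonneg measurableSet_Ioc fun σ _ => hw0 σ
  have hWε : ∀ u, W u ≤ ε := fun u =>
    setIntegral_mono_set hwIci (Filter.Eventually.of_forall hw0)
      (HasSubset.Subset.eventuallyLE (fun x hx => Set.mem_Ici.mpr hx.1.le))
  have hWmono : Monotone W := by
    intro u v huv
    exact setIntegral_mono_set (hwIoc v) (Filter.Eventually.of_forall hw0)
      (HasSubset.Subset.eventuallyLE (Set.Ioc_subset_Ioc_right huv))
  have hWmeas : Measurable W := hWmono.measurable
  have hexpW : ∀ u, Real.exp (W u) ≤ Real.exp ε := fun u => Real.exp_le_exp.mpr (hWε u)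
  have hexpW1 : ∀ u, 1 ≤ Real.exp (W u) := fun u => Real.one_le_exp (hW0 u)
  -- the integrand f
  set f : ℝ → ℝ := fun τ => ∑ k : Fin m, a k τ * X (h k τ) t₀ with hfdef
  have hXf : ∀ u, t₀ ≤ u → X u t₀ = 1 - ∫ τ in Set.Ioc t₀ u, f τ := by
    intro u hu
    rw [hXeq t₀ u ht₀ hu, intervalIntegral.integral_of_le hu]
  have hfbd : ∀ τ C, 0 ≤ C → (∀ r, t₀ ≤ r → r ≤ τ → |X r t₀| ≤ C) → |f τ| ≤ w τ * C := by
    intro τ C hC hXb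
    calc |f τ| ≤ ∑ k : Fin m, |a k τ * X (h k τ) t₀| := Finset.abs_sum_le_sum_abs _ _
      _ ≤ ∑ k : Fin m, |a k τ| * C := by
          refine Finset.sum_le_sum fun k _ => ?_
          rw [abs_mul]
          refine mul_le_mul_of_nonneg_left ?_ (abs_nonneg _)
          rcases lt_or_ge (h k τ) t₀ with hr | hr
          · rw [hX0 t₀ (h k τ) ht₀ hr, abs_zero]; exact hC
          · exact hXb (h k τ) hr (hht k τ)
      _ = w τ * C := by rw [hwdef, Finset.sum_mul]
  -- the main a priori bound
  have hbound : ∀ u, t₀ ≤ u → |X u t₀| ≤ c * Real.exp (W u) := by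
    intro u hu
    by_cases hgood : IntegrableOn f (Set.Ioc t₀ u)
    swap
    · have hX1' : X u t₀ = 1 := by rw [hXf u hu, integral_undef hgood, sub_zero]
      rw [hX1', abs_one]
      nlinarith [hexpW1 u]
    · have hfIcc : IntegrableOn f (Set.Icc t₀ u) := (integrableOn_Icc_iff_integrableOn_Ioc).mpr hgood
      have hXcont : ContinuousOn (fun v => X v t₀) (Set.Icc t₀ u) := by
        have h1 : ContinuousOn (fun v => 1 - ∫ τ in Set.Ioc t₀ v, f τ) (Set.Icc t₀ u) :=
          continuousOn_const.sub (intervalIntegral.continuousOn_primitive hfIcc)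
        exact h1.congr fun v hv => hXf v hv.1
      have hWcont : ContinuousOn W (Set.Icc t₀ u) :=
        intervalIntegral.continuousOn_primitive ((integrableOn_Icc_iff_integrableOn_Ioc).mpr (hwIoc u))
      -- the step estimate
      have st : ∀ v, t₀ ≤ v → v ≤ u →
          (∀ r, t₀ ≤ r → r < v → |X r t₀| ≤ c * Real.exp (W r)) →
          |X v t₀| ≤ 1 + c * (Real.exp (W v) - 1) := by
        intro v hv1 hv2 hIH
        have hgv : IntegrableOn f (Set.Ioc t₀ v) := hgood.mono_set (Set.Ioc_subset_Ioc_right hv2)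
        have h2 : |∫ τ in Set.Ioc t₀ v, f τ| ≤ ∫ τ in Set.Ioc t₀ v, |f τ| := by
          have := norm_integral_le_integral_norm (μ := volume.restrict (Set.Ioc t₀ v)) f
          simpa [Real.norm_eq_abs] using this
        have hint2 : IntegrableOn (fun τ => w τ * (c * Real.exp (W τ))) (Set.Ioc t₀ v) := by
          refine Integrable.mono' (g := fun τ => w τ * (c * Real.exp ε))
            ((hwIoc v).mul_const _)
            ((hwmeas.mul (measurable_const.mul (Real.measurable_exp.comp hWmeas))).aestronglyMeasurable) ?_
          refine Filter.Eventually.of_forall fun τ => ?_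
          rw [Real.norm_eq_abs, abs_of_nonneg (by positivity)]
          show w τ * (c * Real.exp (W τ)) ≤ w τ * (c * Real.exp ε)
          exact mul_le_mul_of_nonneg_left
            (mul_le_mul_of_nonneg_left (hexpW τ) hc0.le) (hw0 τ)
        have h3 : ∫ τ in Set.Ioc t₀ v, |f τ| ≤ ∫ τ in Set.Ioc t₀ v, w τ * (c * Real.exp (W τ)) := by
          refine setIntegral_mono_on_ae hgv.abs hint2 measurableSet_Ioc ?_
          have hne : ∀ᵐ (τ : ℝ), τ ≠ v := by
            rw [ae_iff]
            have : {τ : ℝ | ¬τ ≠ v} = {v} := by ext x; simp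
            rw [this]
            exact measure_singleton v
          filter_upwards [hne] with τ hτne hmem
          have hτv : τ < v := lt_of_le_of_ne hmem.2 hτne
          refine hfbd τ (c * Real.exp (W τ)) (by positivity) fun r hr1 hr2 => ?_
          refine le_trans (hIH r hr1 (lt_of_le_of_lt hr2 hτv)) ?_
          have := Real.exp_le_exp.mpr (hWmono hr2)
          nlinarith
        have h4 : ∫ τ in Set.Ioc t₀ v, w τ * (c * Real.exp (W τ)) = c * (Real.exp (W v) - 1) := by
          have hsub := subst_exp_aux w hwmeas hw0 hv1 (hwIoc v)
          have e1 : ∫ τ in Set.Ioc t₀ v, w τ * (c * Real.exp (W τ)) =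
              c * ∫ τ in Set.Ioc t₀ v, w τ * Real.exp (W τ) := by
            rw [← integral_const_mul]
            refine setIntegral_congr_fun measurableSet_Ioc fun τ _ => ?_
            ring
          rw [e1]
          have e2 : (∫ τ in Set.Ioc t₀ v, w τ * Real.exp (W τ)) = Real.exp (W v) - 1 := hsub
          rw [e2]
        have h5 := hXf v hv1
        have h6 : |X v t₀| ≤ 1 + |∫ τ in Set.Ioc t₀ v, f τ| := by
          rw [h5]
          have := le_abs_self (∫ τ in Set.Ioc t₀ v, f τ)
          have := neg_abs_le (∫ τ in Set.Ioc t₀ v, f τ)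
          rw [abs_le]
          constructor <;> [linarith; linarith]
        linarith
      -- continuous induction
      set S : Set ℝ := {v | v ∈ Set.Icc t₀ u ∧
        ∀ r, t₀ ≤ r → r ≤ v → |X r t₀| ≤ c * Real.exp (W r)} with hSdef
      have ht₀S : t₀ ∈ S := by
        refine ⟨⟨le_rfl, hu⟩, fun r hr1 hr2 => ?_⟩
        have : r = t₀ := le_antisymm hr2 hr1
        rw [this, hX1 t₀ ht₀, abs_one]
        nlinarith [hexpW1 t₀]
      have hSne : S.Nonempty := ⟨t₀, ht₀S⟩
      have hSbdd : BddAbove S := ⟨u, fun x hx => hx.1.2⟩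
      set v₀ : ℝ := sSup S with hv₀def
      have hv₀Icc : v₀ ∈ Set.Icc t₀ u := ⟨le_csSup hSbdd ht₀S, csSup_le hSne fun x hx => hx.1.2⟩
      have hv₀IH : ∀ r, t₀ ≤ r → r < v₀ → |X r t₀| ≤ c * Real.exp (W r) := by
        intro r hr1 hr2
        obtain ⟨v, hvS, hrv⟩ := exists_lt_of_lt_csSup hSne hr2
        exact hvS.2 r hr1 hrv.le
      have hv₀bd : |X v₀ t₀| ≤ 1 + c * (Real.exp (W v₀) - 1) := st v₀ hv₀Icc.1 hv₀Icc.2 hv₀IH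
      have hstrict : |X v₀ t₀| < c * Real.exp (W v₀) := by
        refine lt_of_le_of_lt hv₀bd ?_
        nlinarith [hexpW1 v₀]
      have hv₀S : v₀ ∈ S := by
        refine ⟨hv₀Icc, fun r hr1 hr2 => ?_⟩
        rcases eq_or_lt_of_le hr2 with he | hl
        · rw [he]; exact hstrict.le
        · exact hv₀IH r hr1 hl
      rcases eq_or_lt_of_le hv₀Icc.2 with hequ | hlt
      · exact hv₀S.2 u hu (le_of_eq hequ.symm)
      · exfalso
        have hg : ContinuousWithinAt (fun r => c * Real.exp (W r) - |X r t₀|)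
            (Set.Icc t₀ u) v₀ := by
          refine ContinuousOn.continuousWithinAt ?_ hv₀Icc
          exact (continuousOn_const.mul (Real.continuous_exp.comp_continuousOn hWcont)).sub
            hXcont.abs
        have hev : ∀ᶠ r in nhdsWithin v₀ (Set.Icc t₀ u),
            0 < c * Real.exp (W r) - |X r t₀| :=
          hg.eventually (lt_mem_nhds (sub_pos.mpr hstrict))
        rw [Filter.eventually_iff, Metric.mem_nhdsWithin_iff] at hev
        obtain ⟨δ, hδ0, hδ⟩ := hev
        set v₁ : ℝ := min u (v₀ + δ/2) with hv₁def
        have hv₁gt : v₀ < v₁ := lt_min hlt (by linarith)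
        have hv₁Icc : v₁ ∈ Set.Icc t₀ u := ⟨le_trans hv₀Icc.1 hv₁gt.le, min_le_left _ _⟩
        have hv₁S : v₁ ∈ S := by
          refine ⟨hv₁Icc, fun r hr1 hr2 => ?_⟩
          rcases le_or_gt r v₀ with hc' | hc'
          · exact hv₀S.2 r hr1 hc'
          · have hrIcc : r ∈ Set.Icc t₀ u := ⟨hr1, le_trans hr2 hv₁Icc.2⟩
            have hrball : r ∈ Metric.ball v₀ δ := by
              rw [Metric.mem_ball, Real.dist_eq, abs_of_pos (by linarith)]
              have : r ≤ v₀ + δ/2 := le_trans hr2 (min_le_right _ _)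
              linarith
            have := hδ ⟨hrball, hrIcc⟩
            simp only [Set.mem_setOf_eq] at this
            linarith
        exact absurd (le_csSup hSbdd hv₁S) (not_le.mpr hv₁gt)
  -- part one
  have main : ∀ t ≥ t₀, (1:ℝ)/2 ≤ X t t₀ := by
    intro t htt
    by_cases hgood : IntegrableOn f (Set.Ioc t₀ t)
    · rw [hXf t htt]
      have h2 : |∫ τ in Set.Ioc t₀ t, f τ| ≤ ∫ τ in Set.Ioc t₀ t, |f τ| := by
        have := norm_integral_le_integral_norm (μ := volume.restrict (Set.Ioc t₀ t)) f
        simpa [Real.norm_eq_abs] using this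
      have h3 : ∫ τ in Set.Ioc t₀ t, |f τ| ≤ ∫ τ in Set.Ioc t₀ t, w τ * (c * Real.exp ε) := by
        refine setIntegral_mono_on hgood.abs ((hwIoc t).mul_const _) measurableSet_Ioc
          fun τ _ => ?_
        refine hfbd τ (c * Real.exp ε) (by positivity) fun r hr1 _ => ?_
        refine le_trans (hbound r hr1) ?_
        have := hexpW r
        nlinarith
      have h4 : ∫ τ in Set.Ioc t₀ t, w τ * (c * Real.exp ε) = W t * (c * Real.exp ε) := by
        rw [hWdef]
        exact integral_mul_const _ _
      have h5 : W t * (c * Real.exp ε) ≤ ε * (c * Real.exp ε) :=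
        mul_le_mul_of_nonneg_right (hWε t) (by positivity)
      have h6 : ε * (c * Real.exp ε) ≤ 1/2 := by nlinarith [hc2]
      have h7 : ∫ τ in Set.Ioc t₀ t, f τ ≤ 1/2 := by
        have := le_abs_self (∫ τ in Set.Ioc t₀ t, f τ)
        linarith
      linarith
    · rw [hXf t htt, integral_undef hgood]
      norm_num
  refine ⟨main, fun htend => ?_⟩
  have h1 : ∀ᶠ t in Filter.atTop, X t t₀ < 1/2 :=
    htend.eventually (gt_mem_nhds (by norm_num : (0:ℝ) < 1/2))
  have h2 : ∀ᶠ t in Filter.atTop, t₀ ≤ t := Filter.eventually_ge_atTop t₀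
  obtain ⟨t, ht1, ht2⟩ := (h1.and h2).exists
  linarith [main t ht2]
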